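/- arXiv:1707.05893 — 3 statements merged into one kernel-verified Lean document; each statement's English description precedes it below -/
import Mathlib

section
/- A partition λ = (α_1+1, …, α_p+1 | α_1, …, α_p) in Frobenius notation (with α_1 > ⋯ > α_p ≥ 0) is an even partition (all parts even) if and only if either: p is even, α_1, α_3, …, α_{p−1} are even, and α_{2i−1} − α_{2i} = 1 for all i = 1,…,p/2; or: p is odd, α_1, α_3, …, α_{p−2} are even, α_p = 0, and α_{2i−1} − α_{2i} = 1 for i = 1,…,(p−1)/2. -/
/-- a partition `λ = (α₁+1, …, α_p+1 | α₁, …, α_p)` in Frobenius notation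
(realized as a Young diagram `μ` with Durfee square of size `p`, 0-based row lengths
`α i + i + 2` and column lengths `α i + i + 1` on the Durfee square) is even (all parts
even) if and only if either `p` is even, `α₁, α₃, …, α_{p−1}` (0-based: the `α` at even
indices) are even and consecutive pairs differ by `1`; or `p` is odd, those `α`'s are
even, `α_p = 0`, and the first `(p−1)/2` consecutive pairs differ by `1`. -/
theorem frobenius_arm_plus_one_even_iff (p : ℕ) (hp : 1 ≤ p) (α : Fin p → ℕ)
    (hα : StrictAnti α) (μ : YoungDiagram)
    (hdiag : ∀ i : Fin p, ((i : ℕ), (i : ℕ)) ∈ μ) (hdur : (p, p) ∉ μ)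
    (hrow : ∀ i : Fin p, μ.rowLen i = α i + i + 2)
    (hcol : ∀ i : Fin p, μ.colLen i = α i + i + 1) :
    (∀ i : ℕ, Even (μ.rowLen i)) ↔
      ((Even p ∧ (∀ i : Fin p, Even (i : ℕ) → Even (α i)) ∧
        (∀ j : ℕ, ∀ h : 2 * j + 1 < p, α ⟨2 * j, by omega⟩ = α ⟨2 * j + 1, h⟩ + 1)) ∨
       (Odd p ∧ (∀ i : Fin p, Even (i : ℕ) → (i : ℕ) + 1 < p → Even (α i)) ∧
        α ⟨p - 1, by omega⟩ = 0 ∧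
        (∀ j : ℕ, ∀ h : 2 * j + 1 < p, α ⟨2 * j, by omega⟩ = α ⟨2 * j + 1, h⟩ + 1))) := by
  -- gap lemma: the sequence α j + j is antitone in j
  have hgap : ∀ (a b : ℕ) (ha : a < p) (hb : b < p), a ≤ b →
      α ⟨b, hb⟩ + b ≤ α ⟨a, ha⟩ + a := by
    have aux : ∀ (a : ℕ) (ha : a < p) (b : ℕ), a ≤ b → ∀ (hb : b < p),
        α ⟨b, hb⟩ + b ≤ α ⟨a, ha⟩ + a := by
      intro a ha b hab
      induction b, hab using Nat.le_induction with
      | base => intro _; exact le_refl _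
      | succ b hab ih =>
        intro hb
        have hb' : b < p := by omega
        have h1 : α ⟨b + 1, hb⟩ < α ⟨b, hb'⟩ := hα (by simp [Fin.lt_def])
        have h2 := ih hb'
        omega
    intro a b ha hb hab
    exact aux a ha b hab hb
  have hrow' : ∀ (i : ℕ) (h : i < p), μ.rowLen i = α ⟨i, h⟩ + i + 2 := by
    intro i h
    have := hrow ⟨i, h⟩
    simpa using this
  have factR : ∀ (i j : ℕ) (h : j < p), ((i, j) ∈ μ ↔ i < α ⟨j, h⟩ + j + 1) := by
    intro i j h
    rw [YoungDiagram.mem_iff_lt_colLen]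
    have := hcol ⟨j, h⟩
    simp only [Fin.val_mk] at this
    rw [this]
  constructor
  · intro hE
    have hpar : ∀ (i : ℕ) (h : i < p), (α ⟨i, h⟩ + i) % 2 = 0 := by
      intro i h
      have h1 := hE i
      rw [hrow' i h, Nat.even_iff] at h1
      omega
    -- Claim 1: the pairing α_{2k} = α_{2k+1} + 1
    have claim1 : ∀ (j : ℕ) (hj : 2 * j + 1 < p),
        α ⟨2 * j, by omega⟩ = α ⟨2 * j + 1, hj⟩ + 1 := by
      intro k hk
      by_contra hne
      have hg1 : α ⟨2 * k + 1, hk⟩ + (2 * k + 1) ≤ α ⟨2 * k, by omega⟩ + (2 * k) :=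
        hgap (2 * k) (2 * k + 1) (by omega) hk (by omega)
      have hg2 : α ⟨p - 1, by omega⟩ + (p - 1) ≤ α ⟨2 * k + 1, hk⟩ + (2 * k + 1) :=
        hgap (2 * k + 1) (p - 1) hk (by omega) (by omega)
      set v := α ⟨2 * k, by omega⟩ + 2 * k with hv
      have hvp : p ≤ v := by omega
      have hEv := hE v
      -- 2k < rowLen v
      have hm1 : (v, 2 * k) ∈ μ := (factR v (2 * k) (by omega)).2 (by omega)
      have hlt1 : 2 * k < μ.rowLen v := YoungDiagram.mem_iff_lt_rowLen.1 hm1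
      -- rowLen v ≤ 2k + 1
      have hle : μ.rowLen v ≤ 2 * k + 1 := by
        by_contra hgt
        have hm2 : (v, 2 * k + 1) ∈ μ := YoungDiagram.mem_iff_lt_rowLen.2 (by omega)
        have := (factR v (2 * k + 1) hk).1 hm2
        omega
      rw [Nat.even_iff] at hEv
      omega
    -- Claim 2: if p is odd then α_{p-1} = 0
    have claim2 : Odd p → α ⟨p - 1, by omega⟩ = 0 := by
      intro hodd
      by_contra hne
      have hk : 1 ≤ α ⟨p - 1, by omega⟩ := by omega
      have hEp := hE p
      have hlt : p - 1 < μ.rowLen p := by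
        have hm : (p, p - 1) ∈ μ := (factR p (p - 1) (by omega)).2 (by omega)
        exact YoungDiagram.mem_iff_lt_rowLen.1 hm
      have hle : μ.rowLen p ≤ p := by
        by_contra hgt
        exact hdur (YoungDiagram.mem_iff_lt_rowLen.2 (by omega))
      have hpp : μ.rowLen p = p := by omega
      rw [Nat.even_iff, hpp] at hEp
      rw [Nat.odd_iff] at hodd
      omega
    rcases Nat.even_or_odd p with hpe | hpo
    · left
      refine ⟨hpe, ?_, claim1⟩
      intro i hi
      have := hpar i i.isLt
      have heq : α ⟨(i : ℕ), i.isLt⟩ = α i := by congr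
      rw [Nat.even_iff] at hi ⊢
      omega
    · right
      refine ⟨hpo, ?_, claim2 hpo, claim1⟩
      intro i hi _
      have := hpar i i.isLt
      have heq : α ⟨(i : ℕ), i.isLt⟩ = α i := by congr
      rw [Nat.even_iff] at hi ⊢
      omega
  · intro h
    have pair : ∀ (j : ℕ) (hj : 2 * j + 1 < p),
        α ⟨2 * j, by omega⟩ = α ⟨2 * j + 1, hj⟩ + 1 := by
      rcases h with ⟨_, _, hc⟩ | ⟨_, _, _, hc⟩ <;> exact hc
    have evA : ∀ (i : ℕ) (hi : i < p), i % 2 = 0 → α ⟨i, hi⟩ % 2 = 0 := by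
      intro i hi hie
      rcases h with ⟨hpe, ha, _⟩ | ⟨hpo, ha, h0, _⟩
      · have := ha ⟨i, hi⟩ (by rw [Nat.even_iff]; exact hie)
        rwa [Nat.even_iff] at this
      · rcases Nat.lt_or_ge (i + 1) p with hip | hip
        · have := ha ⟨i, hi⟩ (by rw [Nat.even_iff]; exact hie) (by simpa using hip)
          rwa [Nat.even_iff] at this
        · have hieq : i = p - 1 := by omega
          subst hieq
          have heq : α ⟨p - 1, hi⟩ = 0 := by
            rw [show (⟨p - 1, hi⟩ : Fin p) = ⟨p - 1, by omega⟩ from rfl]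
            exact h0
          omega
    have parA : ∀ (i : ℕ) (hi : i < p), (α ⟨i, hi⟩ + i) % 2 = 0 := by
      intro i hi
      rcases Nat.even_or_odd i with he | ho
      · have := evA i hi (Nat.even_iff.1 he)
        rw [Nat.even_iff] at he
        omega
      · obtain ⟨j, hj⟩ := ho
        subst hj
        have hp1 := pair j (by omega)
        have h2 := evA (2 * j) (by omega) (by omega)
        have heq1 : α ⟨2 * j, (by omega : 2 * j < p)⟩ = α ⟨2 * j, (by omega : 2 * j < p)⟩ := rfl
        have heq2 : α ⟨2 * j + 1, (by omega : 2 * j + 1 < p)⟩ = α ⟨2 * j + 1, hi⟩ := rfl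
        rw [heq2] at hp1
        omega
    intro i
    rcases Nat.lt_or_ge i p with hip | hip
    · rw [hrow' i hip, Nat.even_iff]
      have := parA i hip
      omega
    · rcases Nat.even_or_odd (μ.rowLen i) with he | ho
      · exact he
      · exfalso
        obtain ⟨k, hk⟩ := ho
        have hm1 : (i, 2 * k) ∈ μ := YoungDiagram.mem_iff_lt_rowLen.2 (by omega)
        have h2kp : 2 * k < p := by
          by_contra hge
          exact hdur (μ.up_left_mem (by omega) (by omega) hm1)
        have hic : i < α ⟨2 * k, h2kp⟩ + 2 * k + 1 := (factR i (2 * k) h2kp).1 hm1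
        rcases Nat.lt_or_ge (2 * k + 1) p with hk1 | hk1
        · -- c_{2k+1} = c_{2k} > i, contradiction with rowLen i = 2k+1
          have hp1 := pair k hk1
          have heq : α ⟨2 * k, (by omega : 2 * k < p)⟩ = α ⟨2 * k, h2kp⟩ := rfl
          rw [heq] at hp1
          have hm2 : (i, 2 * k + 1) ∈ μ :=
            (factR i (2 * k + 1) hk1).2 (by omega)
          have := YoungDiagram.mem_iff_lt_rowLen.1 hm2
          omega
        · -- 2k + 1 = p, so p is odd and α_{p-1} = 0, c_{2k} = p ≤ i
          have hpeq : p = 2 * k + 1 := by omega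
          have h0 : α ⟨p - 1, by omega⟩ = 0 := by
            rcases h with ⟨hpe, _, _⟩ | ⟨_, _, h0, _⟩
            · rw [Nat.even_iff] at hpe; omega
            · exact h0
          have h0' : α ⟨2 * k, h2kp⟩ = 0 := by
            have hfin : (⟨p - 1, by omega⟩ : Fin p) = ⟨2 * k, h2kp⟩ := by
              apply Fin.ext
              simp
              omega
            rw [← hfin]
            exact h0
          omega
end

section
/- For every k ≥ 1, the polynomial identity holds: Σ over even p with 2 ≤ p ≤ 2k, of t^{p(p+1)/2} · Σ_{a_1+⋯+a_{p/2} ≤ 2k−p, all a_i even} t^{2a_1+4a_2+⋯+p·a_{p/2}}, plus 1, equals Π_{j=1}^k (1 + t^{4j−1}). -/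
open Polynomial

namespace SpAux

def sMap (q : ℕ) (b : Fin q → ℕ) (j : ℕ) : ℕ :=
  ∑ i ∈ Finset.univ.filter (fun i : Fin q => q ≤ j + (i : ℕ) + 1), b i

def eMap (q : ℕ) (b : Fin q → ℕ) (j : Fin q) : ℕ := (j : ℕ) + sMap q b (j : ℕ)

def dPad (q : ℕ) (e : Fin q → ℕ) (n : ℕ) : ℕ :=
  if h : 1 ≤ n ∧ n ≤ q then e ⟨n - 1, by omega⟩ - (n - 1) else 0

def bOf (q : ℕ) (e : Fin q → ℕ) (i : Fin q) : ℕ :=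
  dPad q e (q - (i : ℕ)) - dPad q e (q - 1 - (i : ℕ))

lemma e_congr {q : ℕ} (e : Fin q → ℕ) {a b : ℕ} (ha : a < q) (hb : b < q) (h : a = b) :
    e ⟨a, ha⟩ = e ⟨b, hb⟩ := by subst h; rfl

lemma dPad_eq {q : ℕ} (e : Fin q → ℕ) {n : ℕ} (hn : 1 ≤ n) (hq : n ≤ q) (h2 : n - 1 < q) :
    dPad q e n = e ⟨n - 1, h2⟩ - (n - 1) := dif_pos ⟨hn, hq⟩

lemma dPad_zero {q : ℕ} (e : Fin q → ℕ) : dPad q e 0 = 0 := dif_neg (by omega)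

lemma sMap_zero {q : ℕ} (b : Fin q → ℕ) (hq : 0 < q) :
    sMap q b 0 = b ⟨q - 1, by omega⟩ := by
  rw [sMap]
  rw [show (Finset.univ.filter (fun i : Fin q => q ≤ 0 + (i : ℕ) + 1)) =
      {(⟨q - 1, by omega⟩ : Fin q)} from by
    ext i
    simp only [Finset.mem_filter, Finset.mem_univ, true_and, Finset.mem_singleton, Fin.ext_iff]
    have := i.2; omega]
  exact Finset.sum_singleton _ _

lemma sMap_succ {q : ℕ} (b : Fin q → ℕ) {j : ℕ} (hj : j + 1 < q) :
    sMap q b (j + 1) = b ⟨q - 2 - j, by omega⟩ + sMap q b j := by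
  rw [sMap, sMap]
  rw [show (Finset.univ.filter (fun i : Fin q => q ≤ (j + 1) + (i : ℕ) + 1)) =
      insert (⟨q - 2 - j, by omega⟩ : Fin q)
        (Finset.univ.filter (fun i : Fin q => q ≤ j + (i : ℕ) + 1)) from by
    ext i
    simp only [Finset.mem_filter, Finset.mem_univ, true_and, Finset.mem_insert, Fin.ext_iff]
    have := i.2; omega]
  rw [Finset.sum_insert (by
    simp only [Finset.mem_filter, Finset.mem_univ, true_and]
    omega)]

lemma sMap_last {q : ℕ} (b : Fin q → ℕ) (hq : 0 < q) :
    sMap q b (q - 1) = ∑ i, b i := by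
  rw [sMap]
  congr 1
  ext i
  simp only [Finset.mem_filter, Finset.mem_univ, true_and, iff_true]
  omega

lemma sMap_le_sum {q : ℕ} (b : Fin q → ℕ) (j : ℕ) : sMap q b j ≤ ∑ i, b i :=
  Finset.sum_le_sum_of_subset (Finset.filter_subset _ _)

lemma sMap_mono {q : ℕ} (b : Fin q → ℕ) {j j' : ℕ} (h : j ≤ j') :
    sMap q b j ≤ sMap q b j' :=
  Finset.sum_le_sum_of_subset (fun i hi => by
    simp only [Finset.mem_filter, Finset.mem_univ, true_and] at *; omega)

lemma eMap_strictMono {q : ℕ} (b : Fin q → ℕ) : StrictMono (eMap q b) := by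
  intro j j' h
  rw [Fin.lt_def] at h
  exact Nat.add_lt_add_of_lt_of_le h (sMap_mono b (by omega))


lemma le_of_strictMono {q : ℕ} {e : Fin q → ℕ} (he : StrictMono e) :
    ∀ (n : ℕ) (h : n < q), n ≤ e ⟨n, h⟩ := by
  intro n
  induction n with
  | zero => intro h; omega
  | succ m ih =>
    intro h
    have h1 : m < q := by omega
    have h2 := he (show (⟨m, h1⟩ : Fin q) < ⟨m + 1, h⟩ from by
      rw [Fin.mk_lt_mk]; omega)
    have h3 := ih h1
    omega

lemma sMap_bOf {q : ℕ} {e : Fin q → ℕ} (he : StrictMono e) :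
    ∀ (j : ℕ), j < q → sMap q (bOf q e) j = dPad q e (j + 1) := by
  intro j
  induction j with
  | zero =>
    intro hj
    rw [sMap_zero _ hj, bOf]
    have h1 : ((⟨q - 1, by omega⟩ : Fin q) : ℕ) = q - 1 := rfl
    rw [h1, show q - (q - 1) = 1 from by omega, show q - 1 - (q - 1) = 0 from by omega,
      dPad_zero]
    show dPad q e 1 - 0 = dPad q e 1
    omega
  | succ j ih =>
    intro hj
    rw [show j + 1 + 1 = j + 2 from by omega]
    rw [sMap_succ _ hj, ih (by omega), bOf]
    have hc : ((⟨q - 2 - j, by omega⟩ : Fin q) : ℕ) = q - 2 - j := rfl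
    rw [hc]
    rw [show q - (q - 2 - j) = j + 2 from by omega]
    rw [show q - 1 - (q - 2 - j) = j + 1 from by omega]
    -- now : dPad (j+2) - dPad (j+1) + dPad (j+1) = dPad (j+2)
    have hj1 : j < q := by omega
    have hj2 : j + 1 < q := hj
    have h1 : dPad q e (j + 1) = e ⟨j, hj1⟩ - j := by
      rw [dPad_eq e (by omega) (by omega) (by omega)]
      rw [e_congr e (by omega) hj1 (show j + 1 - 1 = j from by omega)]
      omega
    have h2 : dPad q e (j + 2) = e ⟨j + 1, hj2⟩ - (j + 1) := by
      rw [dPad_eq e (by omega) (by omega) (by omega)]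
      rw [e_congr e (by omega) hj2 (show j + 2 - 1 = j + 1 from by omega)]
      omega
    have h3 : e ⟨j, hj1⟩ < e ⟨j + 1, hj2⟩ := he (by rw [Fin.mk_lt_mk]; omega)
    have h4 : j ≤ e ⟨j, hj1⟩ := le_of_strictMono he j hj1
    omega

lemma eMap_bOf {q : ℕ} {e : Fin q → ℕ} (he : StrictMono e) : eMap q (bOf q e) = e := by
  funext j
  rw [eMap, sMap_bOf he _ j.2]
  have hj2 : (j : ℕ) + 1 - 1 < q := by have := j.2; omega
  rw [dPad_eq e (by omega) (by omega) hj2]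
  rw [e_congr e hj2 j.2 (by omega)]
  rw [Fin.eta]
  have h4 : ((⟨(j : ℕ), j.2⟩ : Fin q) : ℕ) ≤ e ⟨(j : ℕ), j.2⟩ := le_of_strictMono he _ j.2
  rw [Fin.eta] at h4
  omega

lemma sum_bOf {q : ℕ} {e : Fin q → ℕ} (he : StrictMono e) (hq : 0 < q) (h : q - 1 < q) :
    ∑ i, bOf q e i = e ⟨q - 1, h⟩ - (q - 1) := by
  rw [← sMap_last _ hq, sMap_bOf he _ (by omega)]
  rw [show q - 1 + 1 = q from by omega]
  rw [dPad_eq e (by omega) le_rfl h]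

lemma b_eq_of_sMap_eq {q : ℕ} {b b' : Fin q → ℕ}
    (h : ∀ j : ℕ, j < q → sMap q b j = sMap q b' j) : b = b' := by
  funext i
  by_cases hi : (i : ℕ) + 1 = q
  · have hieq : i = ⟨q - 1, by omega⟩ := Fin.ext (by simp; omega)
    rw [hieq]
    have h0 := h 0 (by omega)
    rw [sMap_zero b (by omega), sMap_zero b' (by omega)] at h0
    exact h0
  · have hi2 : (i : ℕ) + 1 < q := by have := i.2; omega
    set j := q - 2 - (i : ℕ) with hjdef
    have hj : j + 1 < q := by omega
    have hs := h (j + 1) hj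
    rw [sMap_succ b hj, sMap_succ b' hj, h j (by omega)] at hs
    have hieq : i = ⟨q - 2 - j, by omega⟩ := Fin.ext (by simp; omega)
    rw [hieq]
    omega

lemma card_filter_ge {q : ℕ} (i : Fin q) :
    (Finset.univ.filter (fun j : Fin q => q ≤ (j : ℕ) + (i : ℕ) + 1)).card = (i : ℕ) + 1 := by
  have himg : (Finset.univ.filter (fun j : Fin q => q ≤ (j : ℕ) + (i : ℕ) + 1)).image Fin.val
      = Finset.Ico (q - 1 - (i : ℕ)) q := by
    ext n
    simp only [Finset.mem_image, Finset.mem_filter, Finset.mem_univ, true_and, Finset.mem_Ico]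
    constructor
    · rintro ⟨a, ha, rfl⟩
      have := a.2; omega
    · intro hn
      refine ⟨⟨n, hn.2⟩, ?_, rfl⟩
      show q ≤ n + (i : ℕ) + 1
      omega
  have hcard := Finset.card_image_of_injective
    (Finset.univ.filter (fun j : Fin q => q ≤ (j : ℕ) + (i : ℕ) + 1)) Fin.val_injective
  rw [himg, Nat.card_Ico] at hcard
  have := i.2
  omega

lemma sum_sMap {q : ℕ} (b : Fin q → ℕ) :
    ∑ j : Fin q, sMap q b (j : ℕ) = ∑ i : Fin q, ((i : ℕ) + 1) * b i := by
  have h1 : ∀ j : Fin q, sMap q b (j : ℕ)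
      = ∑ i : Fin q, if q ≤ (j : ℕ) + (i : ℕ) + 1 then b i else 0 := by
    intro j
    rw [sMap, Finset.sum_filter]
  simp_rw [h1]
  rw [Finset.sum_comm]
  congr 1
  funext i
  rw [← Finset.sum_filter, Finset.sum_const, card_filter_ge i, smul_eq_mul]

lemma sum_eMap {q : ℕ} (b : Fin q → ℕ) :
    ∑ j : Fin q, eMap q b j = (∑ j : Fin q, (j : ℕ)) + ∑ i : Fin q, ((i : ℕ) + 1) * b i := by
  simp only [eMap]
  rw [Finset.sum_add_distrib, sum_sMap]


open Polynomial in
lemma keyA (k q : ℕ) (hq1 : 1 ≤ q) (hqk : q ≤ k) :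
    ∑ m ∈ Finset.range (k - q + 1), ∑ b ∈ Finset.Nat.antidiagonalTuple q m,
        (X : Polynomial ℚ) ^ (q * (2 * q + 1) + 4 * ∑ i : Fin q, ((i : ℕ) + 1) * b i)
    = ∑ S ∈ Finset.powersetCard q (Finset.range k),
        (X : Polynomial ℚ) ^ (∑ j ∈ S, (4 * (j + 1) - 1)) := by
  rw [Finset.sum_sigma']
  refine Finset.sum_bij (fun x _ => Finset.image (eMap q x.2) Finset.univ) ?_ ?_ ?_ ?_
  · -- maps into powersetCard
    rintro ⟨m, b⟩ ha
    rw [Finset.mem_sigma, Finset.mem_range, Finset.Nat.mem_antidiagonalTuple] at ha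
    dsimp only at ha
    rw [Finset.mem_powersetCard]
    constructor
    · intro n hn
      rw [Finset.mem_image] at hn
      obtain ⟨j, -, rfl⟩ := hn
      rw [Finset.mem_range]
      dsimp only
      have h1 := sMap_le_sum b (j : ℕ)
      have h2 := j.2
      rw [eMap]
      omega
    · rw [Finset.card_image_of_injective _ (eMap_strictMono b).injective]
      simp
  · -- injective
    rintro ⟨m₁, b₁⟩ ha₁ ⟨m₂, b₂⟩ ha₂ himg
    rw [Finset.mem_sigma, Finset.mem_range, Finset.Nat.mem_antidiagonalTuple] at ha₁ ha₂
    dsimp only at ha₁ ha₂ himg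
    have hcard : (Finset.image (eMap q b₁) Finset.univ).card = q := by
      rw [Finset.card_image_of_injective _ (eMap_strictMono b₁).injective]; simp
    have h1 : eMap q b₁ = (Finset.image (eMap q b₁) Finset.univ).orderEmbOfFin hcard :=
      Finset.orderEmbOfFin_unique hcard (fun x => Finset.mem_image_of_mem _ (Finset.mem_univ x))
        (eMap_strictMono b₁)
    have h2 : eMap q b₂ = (Finset.image (eMap q b₁) Finset.univ).orderEmbOfFin hcard :=
      Finset.orderEmbOfFin_unique hcard (fun x => by
        rw [himg]; exact Finset.mem_image_of_mem _ (Finset.mem_univ x))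
        (eMap_strictMono b₂)
    have heq : eMap q b₁ = eMap q b₂ := by rw [h1, h2]
    have hb : b₁ = b₂ := by
      apply b_eq_of_sMap_eq
      intro j hj
      have := congrFun heq ⟨j, hj⟩
      rw [eMap, eMap] at this
      dsimp only at this
      omega
    refine Sigma.ext ?_ (heq_of_eq hb)
    subst hb
    dsimp only
    omega
  · -- surjective
    intro S hS
    rw [Finset.mem_powersetCard] at hS
    obtain ⟨hSsub, hScard⟩ := hS
    set e : Fin q → ℕ := fun i => S.orderEmbOfFin hScard i with he_def
    have he : StrictMono e := (S.orderEmbOfFin hScard).strictMono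
    have hlast : q - 1 < q := by omega
    have hmem_e : ∀ i : Fin q, e i ∈ S := fun i => S.orderEmbOfFin_mem hScard i
    have hsum : ∑ i, bOf q e i = e ⟨q - 1, hlast⟩ - (q - 1) := sum_bOf he (by omega) hlast
    refine ⟨⟨∑ i, bOf q e i, bOf q e⟩, ?_, ?_⟩
    · rw [Finset.mem_sigma, Finset.mem_range, Finset.Nat.mem_antidiagonalTuple]
      dsimp only
      refine ⟨?_, rfl⟩
      have h1 : e ⟨q - 1, hlast⟩ ∈ Finset.range k := hSsub (hmem_e _)
      rw [Finset.mem_range] at h1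
      omega
    · dsimp only
      rw [eMap_bOf he]
      refine Finset.eq_of_subset_of_card_le ?_ ?_
      · intro n hn
        rw [Finset.mem_image] at hn
        obtain ⟨j, -, rfl⟩ := hn
        exact hmem_e j
      · rw [Finset.card_image_of_injective _ he.injective]
        simp [hScard]
  · -- values agree
    rintro ⟨m, b⟩ ha
    dsimp only
    rw [Finset.sum_image (fun x _ y _ h => (eMap_strictMono b).injective h)]
    congr 1
    have hpt : ∀ j : Fin q, 4 * (eMap q b j + 1) - 1 = 4 * eMap q b j + 3 := fun j => by omega
    calc q * (2 * q + 1) + 4 * ∑ i : Fin q, ((i : ℕ) + 1) * b i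
        = 4 * ((∑ j : Fin q, (j : ℕ)) + ∑ i : Fin q, ((i : ℕ) + 1) * b i) + 3 * q := by
          have hT : (∑ j : Fin q, (j : ℕ)) * 2 = q * (q - 1) := by
            rw [Fin.sum_univ_eq_sum_range (fun j => j) q]
            exact Finset.sum_range_id_mul_two q
          have hnl : q * (2 * q + 1) = 2 * (q * (q - 1)) + 3 * q := by
            cases q with
            | zero => simp
            | succ n => simp only [Nat.succ_sub_one]; ring
          omega
      _ = ∑ j : Fin q, (4 * (eMap q b j + 1) - 1) := by
          rw [← sum_eMap b]
          simp_rw [hpt]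
          rw [Finset.sum_add_distrib, Finset.sum_const, ← Finset.mul_sum]
          simp [mul_comm]

open Polynomial in
lemma keyB (k q : ℕ) :
    ∑ m ∈ Finset.range (2 * k - 2 * q + 1),
      ∑ a ∈ (Finset.Nat.antidiagonalTuple q m).filter (fun a => ∀ i, Even (a i)),
        (X : Polynomial ℚ) ^ (∑ i : Fin q, 2 * ((i : ℕ) + 1) * a i)
    = ∑ m ∈ Finset.range (k - q + 1), ∑ b ∈ Finset.Nat.antidiagonalTuple q m,
        (X : Polynomial ℚ) ^ (4 * ∑ i : Fin q, ((i : ℕ) + 1) * b i) := by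
  rw [Finset.sum_sigma', Finset.sum_sigma']
  refine Finset.sum_nbij' (fun x => ⟨x.1 / 2, fun i => x.2 i / 2⟩)
    (fun y => ⟨2 * y.1, fun i => 2 * y.2 i⟩) ?_ ?_ ?_ ?_ ?_
  · rintro ⟨m, a⟩ ha
    rw [Finset.mem_sigma, Finset.mem_range, Finset.mem_filter,
      Finset.Nat.mem_antidiagonalTuple] at ha
    dsimp only at ha
    obtain ⟨hm, hsum, heven⟩ := ha
    have hdiv : ∀ i : Fin q, a i / 2 * 2 = a i := fun i =>
      Nat.div_mul_cancel (heven i).two_dvd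
    have hs2 : (∑ i, a i / 2) * 2 = m := by
      rw [Finset.sum_mul]
      simp_rw [hdiv]
      exact hsum
    rw [Finset.mem_sigma, Finset.mem_range, Finset.Nat.mem_antidiagonalTuple]
    dsimp only
    exact ⟨by omega, by omega⟩
  · rintro ⟨m, b⟩ hb
    rw [Finset.mem_sigma, Finset.mem_range, Finset.Nat.mem_antidiagonalTuple] at hb
    dsimp only at hb
    rw [Finset.mem_sigma, Finset.mem_range, Finset.mem_filter,
      Finset.Nat.mem_antidiagonalTuple]
    dsimp only
    refine ⟨by omega, ?_, fun i => ⟨b i, by ring⟩⟩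
    rw [← Finset.mul_sum, hb.2]
  · rintro ⟨m, a⟩ ha
    rw [Finset.mem_sigma, Finset.mem_range, Finset.mem_filter,
      Finset.Nat.mem_antidiagonalTuple] at ha
    dsimp only at ha
    obtain ⟨hm, hsum, heven⟩ := ha
    refine Sigma.ext ?_ (heq_of_eq ?_)
    · dsimp only
      have hdiv : ∀ i : Fin q, a i / 2 * 2 = a i := fun i =>
        Nat.div_mul_cancel (heven i).two_dvd
      have hs2 : (∑ i, a i / 2) * 2 = m := by
        rw [Finset.sum_mul]; simp_rw [hdiv]; exact hsum
      omega
    · funext i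
      dsimp only
      have := Nat.div_mul_cancel (heven i).two_dvd
      omega
  · rintro ⟨m, b⟩ hb
    refine Sigma.ext (by dsimp only; omega) (heq_of_eq ?_)
    funext i
    dsimp only
    omega
  · rintro ⟨m, a⟩ ha
    rw [Finset.mem_sigma, Finset.mem_range, Finset.mem_filter,
      Finset.Nat.mem_antidiagonalTuple] at ha
    dsimp only at ha
    obtain ⟨hm, hsum, heven⟩ := ha
    dsimp only
    congr 1
    rw [Finset.mul_sum]
    apply Finset.sum_congr rfl
    intro i _
    have := Nat.div_mul_cancel (heven i).two_dvd
    have h2 : 4 * (((i : ℕ) + 1) * (a i / 2)) = 2 * ((i : ℕ) + 1) * (a i / 2 * 2) := by ring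
    rw [this] at h2
    omega

end SpAux

/-- for every `k ≥ 1`,
`1 + Σ_{p even, 2 ≤ p ≤ 2k} t^{p(p+1)/2} Σ_{a₁+⋯+a_{p/2} ≤ 2k−p, aᵢ even} t^{2a₁+4a₂+⋯+p·a_{p/2}}
  = Π_{j=1}^k (1 + t^{4j−1})`. -/
theorem sp_exterior_symmetric_square_hilbert (k : ℕ) (hk : 1 ≤ k) :
    (1 : Polynomial ℚ) +
      ∑ p ∈ (Finset.range (2 * k + 1)).filter (fun p => 2 ≤ p ∧ Even p),
        X ^ (p * (p + 1) / 2) *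
          ∑ m ∈ Finset.range (2 * k - p + 1),
            ∑ a ∈ (Finset.Nat.antidiagonalTuple (p / 2) m).filter
                (fun a => ∀ i, Even (a i)),
              X ^ (∑ i : Fin (p / 2), 2 * ((i : ℕ) + 1) * a i) =
    ∏ j ∈ Finset.range k, (1 + X ^ (4 * (j + 1) - 1)) := by
  have hfilter : (Finset.range (2 * k + 1)).filter (fun p => 2 ≤ p ∧ Even p)
      = (Finset.Icc 1 k).image (fun q => 2 * q) := by
    ext p
    simp only [Finset.mem_filter, Finset.mem_range, Finset.mem_image, Finset.mem_Icc,
      Nat.even_iff]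
    constructor
    · rintro ⟨h1, h2, h3⟩
      exact ⟨p / 2, by omega, by omega⟩
    · rintro ⟨q, hq, rfl⟩
      omega
  rw [hfilter, Finset.sum_image (by intro a _ b _ h; dsimp only at h; omega)]
  have hterm : ∀ q ∈ Finset.Icc 1 k,
      (X : Polynomial ℚ) ^ (2 * q * (2 * q + 1) / 2) *
        (∑ m ∈ Finset.range (2 * k - 2 * q + 1),
          ∑ a ∈ (Finset.Nat.antidiagonalTuple (2 * q / 2) m).filter
              (fun a => ∀ i, Even (a i)),
            X ^ (∑ i : Fin (2 * q / 2), 2 * ((i : ℕ) + 1) * a i))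
      = ∑ S ∈ Finset.powersetCard q (Finset.range k),
          (X : Polynomial ℚ) ^ (∑ j ∈ S, (4 * (j + 1) - 1)) := by
    intro q hq
    rw [Finset.mem_Icc] at hq
    rw [show 2 * q / 2 = q from by omega]
    rw [show 2 * q * (2 * q + 1) / 2 = q * (2 * q + 1) from by
      rw [mul_assoc]; exact Nat.mul_div_cancel_left _ (by norm_num)]
    rw [SpAux.keyB k q, ← SpAux.keyA k q hq.1 hq.2, Finset.mul_sum]
    refine Finset.sum_congr rfl fun m _ => ?_
    rw [Finset.mul_sum]
    refine Finset.sum_congr rfl fun b _ => ?_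
    rw [← pow_add]
  rw [Finset.sum_congr rfl hterm]
  have hR : ∏ j ∈ Finset.range k, (1 + (X : Polynomial ℚ) ^ (4 * (j + 1) - 1))
      = ∑ q ∈ Finset.range (k + 1), ∑ S ∈ Finset.powersetCard q (Finset.range k),
          (X : Polynomial ℚ) ^ (∑ j ∈ S, (4 * (j + 1) - 1)) := by
    calc ∏ j ∈ Finset.range k, (1 + (X : Polynomial ℚ) ^ (4 * (j + 1) - 1))
        = ∏ j ∈ Finset.range k, ((X : Polynomial ℚ) ^ (4 * (j + 1) - 1) + 1) := by
          simp_rw [add_comm (1 : Polynomial ℚ)]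
      _ = ∑ t ∈ (Finset.range k).powerset,
            (∏ j ∈ t, (X : Polynomial ℚ) ^ (4 * (j + 1) - 1)) *
              ∏ j ∈ Finset.range k \ t, (1 : Polynomial ℚ) :=
          Finset.prod_add _ _ _
      _ = ∑ t ∈ (Finset.range k).powerset,
            (X : Polynomial ℚ) ^ (∑ j ∈ t, (4 * (j + 1) - 1)) := by
          refine Finset.sum_congr rfl fun t ht => ?_
          rw [Finset.prod_const_one, mul_one, Finset.prod_pow_eq_pow_sum]
      _ = ∑ q ∈ Finset.range ((Finset.range k).card + 1),
            ∑ S ∈ Finset.powersetCard q (Finset.range k),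
              (X : Polynomial ℚ) ^ (∑ j ∈ S, (4 * (j + 1) - 1)) :=
          Finset.sum_powerset _ _
      _ = _ := by rw [Finset.card_range]
  rw [hR]
  rw [show Finset.range (k + 1) = insert 0 (Finset.Icc 1 k) from by
    ext x; simp; omega]
  rw [Finset.sum_insert (by simp)]
  rw [show (∑ S ∈ Finset.powersetCard 0 (Finset.range k),
      (X : Polynomial ℚ) ^ (∑ j ∈ S, (4 * (j + 1) - 1))) = 1 from by
    rw [Finset.powersetCard_zero, Finset.sum_singleton, Finset.sum_empty, pow_zero]]
end

section
/- For every k ≥ 1: Σ over odd p with 1 ≤ p ≤ 2k−1, of t^{p(p+1)/2} · Σ_{a_1+⋯+a_{(p+1)/2} = 2k−p−1, all a_i even} t^{a_1+3a_2+⋯+p·a_{(p+1)/2}}, equals t^{2k−1} · (1 + Σ over even p with 2 ≤ p ≤ 2k−1, of t^{p(p+1)/2} · Σ_{a_1+⋯+a_{p/2} ≤ 2k−p−1, all a_i even} t^{2a_1+4a_2+⋯+p·a_{p/2}}). -/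
open Polynomial Finset Finset.Nat

private lemma at_scale {j m : ℕ} (g : (Fin j → ℕ) → Polynomial ℚ) :
    ∑ c ∈ antidiagonalTuple j m, g (fun i => 2 * c i)
      = ∑ a ∈ (antidiagonalTuple j (2 * m)).filter (fun a => ∀ i, Even (a i)), g a := by
  refine Finset.sum_nbij (fun c i => 2 * c i) ?_ ?_ ?_ ?_
  · intro c hc
    simp only [Finset.mem_filter, mem_antidiagonalTuple] at hc ⊢
    refine ⟨by rw [← Finset.mul_sum, hc], fun i => ⟨c i, by ring⟩⟩
  · intro c1 _ c2 _ h
    funext i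
    have := congrFun h i
    simp only at this
    omega
  · intro a ha
    simp only [Finset.coe_filter, Set.mem_setOf_eq, mem_antidiagonalTuple] at ha
    obtain ⟨hsum, heven⟩ := ha
    refine ⟨fun i => a i / 2, ?_, ?_⟩
    · simp only [Finset.mem_coe, mem_antidiagonalTuple]
      have h2 : ∀ i, 2 * (a i / 2) = a i := fun i => by
        obtain ⟨r, hr⟩ := heven i; omega
      have : ∑ i, 2 * (a i / 2) = 2 * m := by
        rw [Finset.sum_congr rfl fun i _ => h2 i, hsum]
      rw [← Finset.mul_sum] at this
      omega
    · funext i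
      obtain ⟨r, hr⟩ := heven i
      show 2 * (a i / 2) = a i
      omega
  · intro c _; rfl

private lemma at_odd_zero {j m : ℕ} (g : (Fin j → ℕ) → Polynomial ℚ) :
    ∑ a ∈ (antidiagonalTuple j (2 * m + 1)).filter (fun a => ∀ i, Even (a i)), g a = 0 := by
  rw [Finset.filter_false_of_mem, Finset.sum_empty]
  intro a ha h
  rw [mem_antidiagonalTuple] at ha
  have : Even (∑ i, a i) := Finset.even_sum _ (fun i _ => h i)
  rw [ha, Nat.even_iff] at this
  omega

private lemma at_cons (j M : ℕ) (g : (Fin (j + 1) → ℕ) → Polynomial ℚ) :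
    ∑ c ∈ antidiagonalTuple (j + 1) M, g c
      = ∑ m ∈ Finset.range (M + 1), ∑ d ∈ antidiagonalTuple j m, g (Fin.cons (M - m) d) := by
  rw [Finset.sum_sigma']
  refine (Finset.sum_nbij' (fun x => Fin.cons (M - x.1) x.2)
    (fun c => ⟨M - c 0, Fin.tail c⟩) ?_ ?_ ?_ ?_ ?_).symm
  · intro x hx
    simp only [Finset.mem_sigma, Finset.mem_range, mem_antidiagonalTuple] at hx ⊢
    obtain ⟨h1, h2⟩ := hx
    rw [Fin.sum_univ_succ]
    simp only [Fin.cons_zero, Fin.cons_succ]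
    rw [h2]
    omega
  · intro c hc
    simp only [mem_antidiagonalTuple, Fin.sum_univ_succ] at hc
    simp only [Finset.mem_sigma, Finset.mem_range, mem_antidiagonalTuple]
    constructor
    · omega
    · have h : ∑ i : Fin j, Fin.tail c i = ∑ i : Fin j, c i.succ := rfl
      rw [h]; omega
  · rintro ⟨m, d⟩ hx
    simp only [Finset.mem_sigma, Finset.mem_range, mem_antidiagonalTuple] at hx
    obtain ⟨h1, h2⟩ := hx
    simp only [Fin.cons_zero, Fin.tail_cons]
    rw [show M - (M - m) = m by omega]
  · intro c hc
    simp only [mem_antidiagonalTuple, Fin.sum_univ_succ] at hc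
    show Fin.cons (M - (M - c 0)) (Fin.tail c) = c
    rw [show M - (M - c 0) = c 0 by omega, Fin.cons_self_tail]
  · intro x hx
    rfl

private lemma range_halve (f : ℕ → Polynomial ℚ) (h : ∀ m, f (2 * m + 1) = 0) (M : ℕ) :
    ∑ m ∈ Finset.range (2 * M), f m = ∑ m ∈ Finset.range M, f (2 * m) := by
  induction M with
  | zero => simp
  | succ n ih =>
      rw [show 2 * (n + 1) = (2 * n + 1) + 1 by ring, Finset.sum_range_succ,
        Finset.sum_range_succ, Finset.sum_range_succ, ih, h n, add_zero]

private lemma key_step (j M : ℕ) :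
    (∑ a ∈ (antidiagonalTuple (j + 1) (2 * M)).filter (fun a => ∀ i, Even (a i)),
        X ^ (∑ i : Fin (j + 1), (2 * (i : ℕ) + 1) * a i) : Polynomial ℚ)
      = X ^ (2 * M) * ∑ m ∈ Finset.range (2 * M + 2),
          ∑ b ∈ (antidiagonalTuple j m).filter (fun b => ∀ i, Even (b i)),
            X ^ (∑ i : Fin j, 2 * ((i : ℕ) + 1) * b i) := by
  rw [← at_scale, at_cons]
  rw [show 2 * M + 2 = 2 * (M + 1) by ring,
    range_halve _ (fun m => at_odd_zero _) (M + 1), Finset.mul_sum]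
  refine Finset.sum_congr rfl fun m hm => ?_
  rw [← at_scale, Finset.mul_sum]
  refine Finset.sum_congr rfl fun d hd => ?_
  rw [← pow_add]
  congr 1
  rw [Finset.mem_range] at hm
  rw [mem_antidiagonalTuple] at hd
  rw [Fin.sum_univ_succ]
  simp only [Fin.cons_zero, Fin.cons_succ, Fin.val_succ, Fin.val_zero]
  have h1 : ∑ i : Fin j, (2 * ((i : ℕ) + 1) + 1) * (2 * d i)
      = (∑ i : Fin j, 2 * ((i : ℕ) + 1) * (2 * d i)) + 2 * m := by
    rw [← hd, Finset.mul_sum, ← Finset.sum_add_distrib]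
    exact Finset.sum_congr rfl fun i _ => by ring
  rw [h1]
  have hm' : m ≤ M := by omega
  generalize (∑ i : Fin j, 2 * ((i : ℕ) + 1) * (2 * d i)) = S
  omega

noncomputable def InnerP (k j : ℕ) : Polynomial ℚ :=
  ∑ m ∈ Finset.range (2 * k - 2 * j),
    ∑ a ∈ (antidiagonalTuple j m).filter (fun a => ∀ i, Even (a i)),
      X ^ (∑ i : Fin j, 2 * ((i : ℕ) + 1) * a i)

private lemma innerP_zero (k : ℕ) (hk : 1 ≤ k) : InnerP k 0 = 1 := by
  rw [InnerP]
  rw [Finset.sum_eq_single_of_mem 0 (Finset.mem_range.2 (by omega))]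
  · rw [antidiagonalTuple_zero_zero]
    rw [Finset.filter_singleton]
    simp
  · intro b _ hb
    obtain ⟨m, rfl⟩ : ∃ m, b = m + 1 := ⟨b - 1, by omega⟩
    rw [antidiagonalTuple_zero_succ]
    simp

private lemma claimA (k j : ℕ) (hj : j < k) :
    ((X : Polynomial ℚ) ^ ((2 * j + 1) * ((2 * j + 1) + 1) / 2) *
      ∑ a ∈ (antidiagonalTuple ((2 * j + 1 + 1) / 2) (2 * k - (2 * j + 1) - 1)).filter
          (fun a => ∀ i, Even (a i)),
        X ^ (∑ i : Fin ((2 * j + 1 + 1) / 2), (2 * (i : ℕ) + 1) * a i))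
      = X ^ (2 * j * j + j + (2 * k - 1)) * InnerP k j := by
  obtain ⟨s, rfl⟩ : ∃ s, k = j + 1 + s := ⟨k - j - 1, by omega⟩
  rw [show (2 * j + 1 + 1) / 2 = j + 1 by omega,
    show 2 * (j + 1 + s) - (2 * j + 1) - 1 = 2 * s by omega,
    key_step j s, InnerP, show 2 * (j + 1 + s) - 2 * j = 2 * s + 2 by omega,
    ← mul_assoc, ← pow_add]
  congr 2
  rw [show (2 * j + 1) * ((2 * j + 1) + 1) = 2 * ((2 * j + 1) * (j + 1)) by ring,
    Nat.mul_div_cancel_left _ (by norm_num : 0 < 2),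
    show 2 * (j + 1 + s) - 1 = 2 * j + 2 * s + 1 by omega]
  ring

set_option maxHeartbeats 1000000 in
/-- for every `k ≥ 1`,
`Σ_{p odd, 1 ≤ p ≤ 2k−1} t^{p(p+1)/2} Σ_{a₁+⋯+a_{(p+1)/2} = 2k−p−1, aᵢ even} t^{a₁+3a₂+⋯+p·a_{(p+1)/2}}
 = t^{2k−1} (1 + Σ_{p even, 2 ≤ p ≤ 2k−1} t^{p(p+1)/2} Σ_{a₁+⋯+a_{p/2} ≤ 2k−p−1, aᵢ even} t^{2a₁+4a₂+⋯+p·a_{p/2}})`. -/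
theorem so_exterior_exterior_square_identity (k : ℕ) (hk : 1 ≤ k) :
    (∑ p ∈ (Finset.range (2 * k)).filter (fun p => 1 ≤ p ∧ Odd p),
      X ^ (p * (p + 1) / 2) *
        ∑ a ∈ (Finset.Nat.antidiagonalTuple ((p + 1) / 2) (2 * k - p - 1)).filter
            (fun a => ∀ i, Even (a i)),
          X ^ (∑ i : Fin ((p + 1) / 2), (2 * (i : ℕ) + 1) * a i) : Polynomial ℚ) =
    X ^ (2 * k - 1) *
      (1 + ∑ p ∈ (Finset.range (2 * k)).filter (fun p => 2 ≤ p ∧ Even p),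
        X ^ (p * (p + 1) / 2) *
          ∑ m ∈ Finset.range (2 * k - p),
            ∑ a ∈ (Finset.Nat.antidiagonalTuple (p / 2) m).filter
                (fun a => ∀ i, Even (a i)),
              X ^ (∑ i : Fin (p / 2), 2 * ((i : ℕ) + 1) * a i)) := by
  obtain ⟨K, rfl⟩ : ∃ K, k = K + 1 := ⟨k - 1, by omega⟩
  have himg1 : (Finset.range (2 * (K + 1))).filter (fun p => 1 ≤ p ∧ Odd p)
      = (Finset.range (K + 1)).image (fun j => 2 * j + 1) := by
    ext p
    simp only [Finset.mem_filter, Finset.mem_range, Finset.mem_image, Nat.odd_iff]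
    constructor
    · rintro ⟨hp, h1, h2⟩; exact ⟨p / 2, by omega, by omega⟩
    · rintro ⟨j, hj, rfl⟩; omega
  have himg2 : (Finset.range (2 * (K + 1))).filter (fun p => 2 ≤ p ∧ Even p)
      = (Finset.range K).image (fun j => 2 * j + 2) := by
    ext p
    simp only [Finset.mem_filter, Finset.mem_range, Finset.mem_image, Nat.even_iff]
    constructor
    · rintro ⟨hp, h1, h2⟩; exact ⟨p / 2 - 1, by omega, by omega⟩
    · rintro ⟨j, hj, rfl⟩; omega
  rw [himg1, himg2, Finset.sum_image (fun a _ b _ h => by omega),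
    Finset.sum_image (fun a _ b _ h => by omega)]
  have hL : ∑ j ∈ Finset.range (K + 1),
      ((X : Polynomial ℚ) ^ ((2 * j + 1) * ((2 * j + 1) + 1) / 2) *
        ∑ a ∈ (antidiagonalTuple ((2 * j + 1 + 1) / 2) (2 * (K + 1) - (2 * j + 1) - 1)).filter
            (fun a => ∀ i, Even (a i)),
          X ^ (∑ i : Fin ((2 * j + 1 + 1) / 2), (2 * (i : ℕ) + 1) * a i))
      = ∑ j ∈ Finset.range (K + 1),
        X ^ (2 * j * j + j + (2 * (K + 1) - 1)) * InnerP (K + 1) j :=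
    Finset.sum_congr rfl fun j hj => claimA (K + 1) j (Finset.mem_range.1 hj)
  rw [hL, Finset.sum_range_succ']
  have hR : ∑ j ∈ Finset.range K,
      ((X : Polynomial ℚ) ^ ((2 * j + 2) * ((2 * j + 2) + 1) / 2) *
        ∑ m ∈ Finset.range (2 * (K + 1) - (2 * j + 2)),
          ∑ a ∈ (antidiagonalTuple ((2 * j + 2) / 2) m).filter (fun a => ∀ i, Even (a i)),
            X ^ (∑ i : Fin ((2 * j + 2) / 2), 2 * ((i : ℕ) + 1) * a i))
      = ∑ j ∈ Finset.range K,
        X ^ ((j + 1) * (2 * j + 3)) * InnerP (K + 1) (j + 1) := by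
    refine Finset.sum_congr rfl fun j hj => ?_
    rw [show (2 * j + 2) / 2 = j + 1 by omega,
      show (2 * j + 2) * ((2 * j + 2) + 1) = 2 * ((j + 1) * (2 * j + 3)) by ring,
      Nat.mul_div_cancel_left _ (by norm_num : 0 < 2)]
    rw [InnerP, show 2 * (K + 1) - 2 * (j + 1) = 2 * (K + 1) - (2 * j + 2) by omega]
  rw [hR]
  conv_rhs => rw [mul_add, mul_one, Finset.mul_sum]
  rw [add_comm ((X : Polynomial ℚ) ^ (2 * (K + 1) - 1))]
  congr 1
  · refine Finset.sum_congr rfl fun j hj => ?_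
    rw [← mul_assoc, ← pow_add]
    congr 2
    zify [show 1 ≤ 2 * (K + 1) from by omega]
    ring
  · rw [innerP_zero (K + 1) (by omega), mul_one]
    congr 1
    omega
end
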